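/- Let ν be a nonzero, locally finite Borel measure on ℝ. Let (a_n) and (b_n) be real sequences with a_n ≠ 0 for all n, a_n → a where a ≠ 0, and b_n → b, and suppose that for each n there exists c_n > 0 such that the pushforward of ν under x ↦ a_n·x + b_n equals c_n·ν. Then there exists c > 0 such that the pushforward of ν under x ↦ a·x + b equals c·ν. In other words, the set of invertible affine maps ψ of ℝ with ψ_*ν proportional to ν is closed under convergence of the coefficients. -/

import Mathlib

open MeasureTheory Filter
open scoped NNReal
open scoped ENNReal

open Set in
private lemma aux_bdd {A B e : ℝ} (he : 0 < e) {al be : ℝ} (hal : e ≤ |al|) (hbe : |be| ≤ B)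
    {s t x : ℝ} (hs : |s| ≤ A) (ht : |t| ≤ A) (hx : al * x + be ∈ Ioc s t) :
    |x| ≤ (A + B) / e := by
  rw [le_div_iff₀ he]
  have h1 : |al * x + be| ≤ A := by
    rw [abs_le] at hs ht ⊢
    exact ⟨by linarith [hx.1], by linarith [hx.2]⟩
  have h2 : |al * x| ≤ A + B := by
    calc |al * x| = |(al * x + be) + -be| := by ring_nf
    _ ≤ |al * x + be| + |-be| := abs_add_le _ _
    _ ≤ A + B := by rw [abs_neg]; linarith
  rw [abs_mul] at h2
  nlinarith [abs_nonneg x, abs_nonneg al]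

open Set in
private lemma aux_tendsto (ν : Measure ℝ) [IsLocallyFiniteMeasure ν]
    (a b : ℕ → ℝ) (a0 b0 : ℝ) (ha0 : a0 ≠ 0)
    (haconv : Tendsto a atTop (nhds a0)) (hbconv : Tendsto b atTop (nhds b0))
    (s t : ℝ) (hgs : ν {x | a0 * x + b0 = s} = 0) (hgt : ν {x | a0 * x + b0 = t} = 0) :
    Tendsto (fun n => ν ((fun x => a n * x + b n) ⁻¹' Ioc s t)) atTop
      (nhds (ν ((fun x => a0 * x + b0) ⁻¹' Ioc s t))) := by
  have hpt : ∀ x : ℝ, Tendsto (fun n => a n * x + b n) atTop (nhds (a0 * x + b0)) :=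
    fun x => (haconv.mul_const x).add hbconv
  have habs : ∀ᶠ n in atTop, |a0| / 2 ≤ |a n| ∧ |b n| ≤ |b0| + 1 := by
    have h1 := haconv.abs.eventually (eventually_ge_nhds (half_lt_self (abs_pos.2 ha0)))
    have h2 := hbconv.abs.eventually (eventually_le_nhds (lt_add_one |b0|))
    filter_upwards [h1, h2] with n hn1 hn2 using ⟨hn1, hn2⟩
  obtain ⟨N, hN⟩ := eventually_atTop.mp habs
  set A := max |s| |t| with hA
  set M := (A + (|b0| + 1)) / (|a0| / 2) with hM
  have hsA : |s| ≤ A := le_max_left _ _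
  have htA : |t| ≤ A := le_max_right _ _
  have hhalf : (0:ℝ) < |a0| / 2 := half_pos (abs_pos.2 ha0)
  have hMpre : ∀ n, N ≤ n → (fun x => a n * x + b n) ⁻¹' Ioc s t ⊆ Icc (-M) M := by
    intro n hn x hx
    exact abs_le.mp (aux_bdd hhalf (hN n hn).1 (hN n hn).2 hsA htA hx)
  have hMpre0 : (fun x => a0 * x + b0) ⁻¹' Ioc s t ⊆ Icc (-M) M := by
    intro x hx
    exact abs_le.mp (aux_bdd hhalf (half_le_self (abs_nonneg a0)) (by linarith [abs_nonneg b0]) hsA htA hx)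
  have hmeasn : ∀ n, Measurable (fun x : ℝ => a n * x + b n) :=
    fun n => (measurable_id.const_mul _).add_const _
  have hmeas0 : Measurable (fun x : ℝ => a0 * x + b0) :=
    (measurable_id.const_mul _).add_const _
  have hpre_meas : ∀ n, MeasurableSet ((fun x : ℝ => a n * x + b n) ⁻¹' Ioc s t) :=
    fun n => (hmeasn n) measurableSet_Ioc
  rw [← tendsto_add_atTop_iff_nat N]
  set F : ℕ → ℝ → ℝ≥0∞ :=
    fun k x => ((fun y : ℝ => a (k + N) * y + b (k + N)) ⁻¹' Ioc s t).indicator 1 x with hF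
  have key : Tendsto (fun k => ∫⁻ x, F k x ∂ν) atTop
      (nhds (∫⁻ x, ((fun y : ℝ => a0 * y + b0) ⁻¹' Ioc s t).indicator 1 x ∂ν)) := by
    apply tendsto_lintegral_of_dominated_convergence ((Icc (-M) M).indicator 1)
    · exact fun k => (measurable_const : Measurable (1 : ℝ → ℝ≥0∞)).indicator (hpre_meas _)
    · intro k
      refine Eventually.of_forall (fun x => ?_)
      exact Set.indicator_le_indicator_of_subset (hMpre _ (Nat.le_add_left N k))
        (fun _ => zero_le) x
    · rw [lintegral_indicator_one measurableSet_Icc]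
      exact (isCompact_Icc.measure_lt_top).ne
    · have hbad : ν ({x : ℝ | a0 * x + b0 = s} ∪ {x | a0 * x + b0 = t}) = 0 :=
        measure_union_null hgs hgt
      filter_upwards [measure_eq_zero_iff_ae_notMem.mp hbad] with x hx
      simp only [mem_union, mem_setOf_eq, not_or] at hx
      obtain ⟨hxs, hxt⟩ := hx
      have hU : ∃ U : Set ℝ, IsOpen U ∧ (a0 * x + b0) ∈ U ∧
          ∀ y ∈ U, (y ∈ Ioc s t ↔ (a0 * x + b0) ∈ Ioc s t) := by
        by_cases hmem : (a0 * x + b0) ∈ Ioc s t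
        · refine ⟨Ioo s t, isOpen_Ioo, ⟨hmem.1, lt_of_le_of_ne hmem.2 hxt⟩, fun y hy => ?_⟩
          simp [Ioo_subset_Ioc_self hy, hmem]
        · refine ⟨Iio s ∪ Ioi t, isOpen_Iio.union isOpen_Ioi, ?_, fun y hy => ?_⟩
          · rcases lt_trichotomy (a0 * x + b0) s with h | h | h
            · exact Or.inl h
            · exact absurd h hxs
            · refine Or.inr ?_
              by_contra hle
              simp only [mem_Ioi, not_lt] at hle
              exact hmem ⟨h, le_of_not_gt (by simpa using hle)⟩
          · refine iff_of_false ?_ hmem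
            rcases hy with h | h
            · exact fun hc => absurd hc.1 (not_lt.2 h.le)
            · exact fun hc => absurd hc.2 (not_le.2 h)
      obtain ⟨U, hUo, hUx, hUiff⟩ := hU
      have hev : ∀ᶠ k in atTop, (a (k + N) * x + b (k + N)) ∈ U :=
        ((hpt x).comp (tendsto_add_atTop_nat N)).eventually (hUo.mem_nhds hUx)
      refine (tendsto_congr' ?_).mpr tendsto_const_nhds
      filter_upwards [hev] with k hk
      show ((fun y : ℝ => a (k + N) * y + b (k + N)) ⁻¹' Ioc s t).indicator 1 x
          = ((fun y : ℝ => a0 * y + b0) ⁻¹' Ioc s t).indicator 1 x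
      by_cases hmem : x ∈ ((fun y : ℝ => a (k + N) * y + b (k + N)) ⁻¹' Ioc s t)
      · rw [Set.indicator_of_mem hmem, Set.indicator_of_mem]
        exact mem_preimage.mpr ((hUiff _ hk).mp (mem_preimage.mp hmem))
      · rw [Set.indicator_of_notMem hmem, Set.indicator_of_notMem]
        exact fun h => hmem (mem_preimage.mpr ((hUiff _ hk).mpr (mem_preimage.mp h)))
  have e1 : ∀ k, ∫⁻ x, F k x ∂ν = ν ((fun y : ℝ => a (k + N) * y + b (k + N)) ⁻¹' Ioc s t) :=
    fun k => lintegral_indicator_one (hpre_meas _)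
  have e0 : ∫⁻ x, ((fun y : ℝ => a0 * y + b0) ⁻¹' Ioc s t).indicator 1 x ∂ν
      = ν ((fun y : ℝ => a0 * y + b0) ⁻¹' Ioc s t) :=
    lintegral_indicator_one (hmeas0 measurableSet_Ioc)
  rw [e0] at key
  exact key.congr e1

/-- The set of invertible affine maps of `ℝ` preserving a nonzero locally finite
measure `ν` up to a positive scalar is closed under convergence of coefficients. -/
theorem stmt10 (ν : Measure ℝ) [IsLocallyFiniteMeasure ν] (hν : ν ≠ 0)
    (a b : ℕ → ℝ) (a0 b0 : ℝ)
    (ha : ∀ n, a n ≠ 0) (ha0 : a0 ≠ 0)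
    (haconv : Tendsto a atTop (nhds a0)) (hbconv : Tendsto b atTop (nhds b0))
    (hinv : ∀ n, ∃ c : ℝ≥0, 0 < c ∧ Measure.map (fun x => a n * x + b n) ν = c • ν) :
    ∃ c : ℝ≥0, 0 < c ∧ Measure.map (fun x => a0 * x + b0) ν = c • ν := by
  classical
  choose c hcpos hcmap using hinv
  have hmeasn : ∀ n, Measurable (fun x : ℝ => a n * x + b n) :=
    fun n => (measurable_id.const_mul _).add_const _
  have hmeas0 : Measurable (fun x : ℝ => a0 * x + b0) :=
    (measurable_id.const_mul _).add_const _
  have hrw : ∀ n (S : Set ℝ), MeasurableSet S →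
      ν ((fun x => a n * x + b n) ⁻¹' S) = (c n : ℝ≥0∞) * ν S := by
    intro n S hS
    rw [← Measure.map_apply (hmeasn n) hS, hcmap n, Measure.smul_apply, ENNReal.smul_def,
      smul_eq_mul]
  -- countably many "bad" levels
  have hAcount : Set.Countable {y : ℝ | 0 < ν {x | a0 * x + b0 = y}} :=
    Measure.countable_meas_level_set_pos hmeas0
  have hpick : ∀ u v : ℝ, u < v → ∃ y, y ∈ Set.Ioo u v ∧ ν {x | a0 * x + b0 = y} = 0 := by
    intro u v huv
    have hvol : volume (Set.Ioo u v \ {y : ℝ | 0 < ν {x | a0 * x + b0 = y}}) ≠ 0 := by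
      rw [measure_diff_null (hAcount.measure_zero volume), Real.volume_Ioo]
      simp only [ne_eq, ENNReal.ofReal_eq_zero, not_le]
      linarith
    obtain ⟨y, hy⟩ := nonempty_of_measure_ne_zero hvol
    refine ⟨y, hy.1, ?_⟩
    by_contra h
    exact hy.2 (pos_iff_ne_zero.mpr h)
  -- bounded preimages have finite measure
  have hfin_pre : ∀ s t : ℝ, ν ((fun x => a0 * x + b0) ⁻¹' Set.Ioc s t) ≠ ⊤ := by
    intro s t
    set M := (max |s| |t| + |b0|) / |a0| with hM
    have hsub : (fun x => a0 * x + b0) ⁻¹' Set.Ioc s t ⊆ Set.Icc (-M) M := by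
      intro x hx
      exact abs_le.mp (aux_bdd (abs_pos.2 ha0) le_rfl le_rfl (le_max_left _ _)
        (le_max_right _ _) hx)
    exact ((measure_mono hsub).trans_lt measure_Icc_lt_top).ne
  -- a reference interval with positive finite measure
  obtain ⟨n0, hn0⟩ : ∃ n : ℕ, ν (Set.Ioc (-(n : ℝ)) n) ≠ 0 := by
    by_contra h
    push_neg at h
    apply hν
    rw [← Measure.measure_univ_eq_zero]
    refine measure_mono_null (fun x _ => ?_) (measure_iUnion_null h)
    obtain ⟨n, hn⟩ := exists_nat_gt |x|
    obtain ⟨h1, h2⟩ := abs_lt.mp hn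
    exact Set.mem_iUnion.mpr ⟨n, h1, h2.le⟩
  obtain ⟨s, hsmem, hgs⟩ := hpick (-(n0 : ℝ) - 1) (-(n0 : ℝ)) (by linarith)
  obtain ⟨t, htmem, hgt⟩ := hpick (n0 : ℝ) ((n0 : ℝ) + 1) (by linarith)
  have hn0r : (0:ℝ) ≤ (n0 : ℝ) := Nat.cast_nonneg n0
  set m : ℝ≥0∞ := ν (Set.Ioc s t) with hm
  have hm0 : m ≠ 0 := by
    intro h
    exact hn0 (measure_mono_null (Set.Ioc_subset_Ioc hsmem.2.le htmem.1.le) h)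
  have hmtop : m ≠ ⊤ := measure_Ioc_lt_top.ne
  set L : ℝ≥0∞ := ν ((fun x => a0 * x + b0) ⁻¹' Set.Ioc s t) with hL
  have hLtop : L ≠ ⊤ := hfin_pre s t
  have htendL : Tendsto (fun n => (c n : ℝ≥0∞) * m) atTop (nhds L) :=
    (aux_tendsto ν a b a0 b0 ha0 haconv hbconv s t hgs hgt).congr
      (fun n => hrw n _ measurableSet_Ioc)
  have hctend : Tendsto (fun n => (c n : ℝ≥0∞)) atTop (nhds (L * m⁻¹)) := by
    have h2 := ENNReal.Tendsto.mul_const htendL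
      (Or.inr (ENNReal.inv_ne_top.2 hm0))
    refine h2.congr (fun n => ?_)
    rw [mul_assoc, ENNReal.mul_inv_cancel hm0 hmtop, mul_one]
  set cc : ℝ≥0∞ := L * m⁻¹ with hcc
  have hcctop : cc ≠ ⊤ := ENNReal.mul_ne_top hLtop (ENNReal.inv_ne_top.2 hm0)
  -- step E
  have hE : ∀ s' t' : ℝ, ν {x | a0 * x + b0 = s'} = 0 → ν {x | a0 * x + b0 = t'} = 0 →
      ν ((fun x => a0 * x + b0) ⁻¹' Set.Ioc s' t') = cc * ν (Set.Ioc s' t') := by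
    intro s' t' hgs' hgt'
    have h1 : Tendsto (fun n => (c n : ℝ≥0∞) * ν (Set.Ioc s' t')) atTop
        (nhds (ν ((fun x => a0 * x + b0) ⁻¹' Set.Ioc s' t'))) :=
      (aux_tendsto ν a b a0 b0 ha0 haconv hbconv s' t' hgs' hgt').congr
        (fun n => hrw n _ measurableSet_Ioc)
    have h2 : Tendsto (fun n => (c n : ℝ≥0∞) * ν (Set.Ioc s' t')) atTop
        (nhds (cc * ν (Set.Ioc s' t'))) :=
      ENNReal.Tendsto.mul_const hctend (Or.inr measure_Ioc_lt_top.ne)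
    exact tendsto_nhds_unique h1 h2
  set cnn : ℝ≥0 := cc.toNNReal with hcnn
  have hcnncoe : (cnn : ℝ≥0∞) = cc := ENNReal.coe_toNNReal hcctop
  -- the measures agree on rational Ioo intervals
  have hIoo : ∀ P Q : ℝ, P < Q →
      Measure.map (fun x => a0 * x + b0) ν (Set.Ioo P Q) = (cnn • ν) (Set.Ioo P Q) := by
    intro P Q hPQ
    -- choose good endpoints approaching P and Q
    have hSex : ∀ k : ℕ, ∃ y, y ∈ Set.Ioo P (min (P + 1 / (k + 1)) ((P + Q) / 2)) ∧
        ν {x | a0 * x + b0 = y} = 0 := by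
      intro k
      refine hpick _ _ (lt_min ?_ (by linarith))
      have : (0:ℝ) < 1 / (k + 1) := by positivity
      linarith
    have hTex : ∀ k : ℕ, ∃ y, y ∈ Set.Ioo (max (Q - 1 / (k + 1)) ((P + Q) / 2)) Q ∧
        ν {x | a0 * x + b0 = y} = 0 := by
      intro k
      refine hpick _ _ (max_lt ?_ (by linarith))
      have : (0:ℝ) < 1 / (k + 1) := by positivity
      linarith
    choose S hSmem hSgood using hSex
    choose T hTmem hTgood using hTex
    set U : ℕ → ℝ := fun k => (Finset.range (k + 1)).inf' ⟨0, Finset.mem_range.mpr k.succ_pos⟩ S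
      with hU
    set V : ℕ → ℝ := fun k => (Finset.range (k + 1)).sup' ⟨0, Finset.mem_range.mpr k.succ_pos⟩ T
      with hV
    have hUex : ∀ k, ∃ j, U k = S j := by
      intro k
      obtain ⟨j, _, hj⟩ := Finset.exists_mem_eq_inf' (⟨0, Finset.mem_range.mpr k.succ_pos⟩ :
        (Finset.range (k + 1)).Nonempty) S
      exact ⟨j, hj⟩
    have hVex : ∀ k, ∃ j, V k = T j := by
      intro k
      obtain ⟨j, _, hj⟩ := Finset.exists_mem_eq_sup' (⟨0, Finset.mem_range.mpr k.succ_pos⟩ :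
        (Finset.range (k + 1)).Nonempty) T
      exact ⟨j, hj⟩
    have hUgood : ∀ k, ν {x | a0 * x + b0 = U k} = 0 := by
      intro k; obtain ⟨j, hj⟩ := hUex k; rw [hj]; exact hSgood j
    have hVgood : ∀ k, ν {x | a0 * x + b0 = V k} = 0 := by
      intro k; obtain ⟨j, hj⟩ := hVex k; rw [hj]; exact hTgood j
    have hUP : ∀ k, P < U k := by
      intro k; obtain ⟨j, hj⟩ := hUex k; rw [hj]; exact (hSmem j).1
    have hVQ : ∀ k, V k < Q := by
      intro k; obtain ⟨j, hj⟩ := hVex k; rw [hj]; exact (hTmem j).2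
    have hU_anti : Antitone U := by
      intro k l hkl
      refine Finset.le_inf' _ _ (fun j hj => Finset.inf'_le _ ?_)
      exact Finset.range_subset_range.mpr (by omega) hj
    have hV_mono : Monotone V := by
      intro k l hkl
      refine Finset.sup'_le _ _ (fun j hj => Finset.le_sup' _ ?_)
      exact Finset.range_subset_range.mpr (by omega) hj
    have hUle : ∀ k, U k ≤ S k := fun k =>
      Finset.inf'_le _ (Finset.mem_range.mpr (Nat.lt_succ_self k))
    have hVge : ∀ k, T k ≤ V k := fun k =>
      Finset.le_sup' _ (Finset.mem_range.mpr (Nat.lt_succ_self k))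
    have h1k : Tendsto (fun k : ℕ => P + 1 / ((k : ℝ) + 1)) atTop (nhds P) := by
      have := tendsto_one_div_add_atTop_nhds_zero_nat (𝕜 := ℝ)
      simpa using (tendsto_const_nhds (x := P)).add this
    have hUtend : Tendsto U atTop (nhds P) := by
      refine tendsto_of_tendsto_of_tendsto_of_le_of_le tendsto_const_nhds h1k
        (fun k => (hUP k).le) (fun k => ?_)
      exact (hUle k).trans ((hSmem k).2.le.trans (min_le_left _ _))
    have h2k : Tendsto (fun k : ℕ => Q - 1 / ((k : ℝ) + 1)) atTop (nhds Q) := by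
      have := tendsto_one_div_add_atTop_nhds_zero_nat (𝕜 := ℝ)
      simpa using (tendsto_const_nhds (x := Q)).sub this
    have hVtend : Tendsto V atTop (nhds Q) := by
      refine tendsto_of_tendsto_of_tendsto_of_le_of_le h2k tendsto_const_nhds
        (fun k => ?_) (fun k => (hVQ k).le)
      exact (le_max_left _ _).trans ((hTmem k).1.le.trans (hVge k))
    have hUnion : (⋃ k, Set.Ioc (U k) (V k)) = Set.Ioo P Q := by
      apply Set.Subset.antisymm
      · refine Set.iUnion_subset (fun k x hx => ?_)
        exact ⟨(hUP k).trans hx.1, lt_of_le_of_lt hx.2 (hVQ k)⟩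
      · intro x hx
        have h1 : ∀ᶠ k in atTop, U k < x := hUtend.eventually (eventually_lt_nhds hx.1)
        have h2 : ∀ᶠ k in atTop, x < V k := hVtend.eventually (eventually_gt_nhds hx.2)
        obtain ⟨k, hk1, hk2⟩ := (h1.and h2).exists
        exact Set.mem_iUnion.mpr ⟨k, hk1, hk2.le⟩
    have hMono : Monotone (fun k => Set.Ioc (U k) (V k)) :=
      fun k l hkl => Set.Ioc_subset_Ioc (hU_anti hkl) (hV_mono hkl)
    have h1 : Measure.map (fun x => a0 * x + b0) ν (Set.Ioo P Q)
        = ⨆ k, Measure.map (fun x => a0 * x + b0) ν (Set.Ioc (U k) (V k)) := by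
      rw [← hUnion, hMono.directed_le.measure_iUnion]
    have h2 : (cnn • ν) (Set.Ioo P Q) = ⨆ k, (cnn • ν) (Set.Ioc (U k) (V k)) := by
      rw [← hUnion, hMono.directed_le.measure_iUnion]
    rw [h1, h2]
    refine iSup_congr (fun k => ?_)
    rw [Measure.map_apply hmeas0 measurableSet_Ioc, hE _ _ (hUgood k) (hVgood k),
      Measure.smul_apply, ENNReal.smul_def, smul_eq_mul, hcnncoe]
  -- extensionality via the rational-Ioo pi-system
  have hmain : Measure.map (fun x => a0 * x + b0) ν = cnn • ν := by
    refine Measure.ext_of_generateFrom_of_iUnion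
      (⋃ (p : ℚ) (q : ℚ) (_ : p < q), {Set.Ioo (p : ℝ) (q : ℝ)})
      (fun i => Set.Ioo ((-(i : ℚ) - 1 : ℚ) : ℝ) (((i : ℚ) + 1 : ℚ) : ℝ))
      (BorelSpace.measurable_eq.trans Real.borel_eq_generateFrom_Ioo_rat)
      Real.isPiSystem_Ioo_rat ?_ ?_ ?_ ?_
    · refine Set.eq_univ_of_forall (fun x => ?_)
      obtain ⟨n, hn⟩ := exists_nat_gt |x|
      obtain ⟨h1, h2⟩ := abs_lt.mp hn
      refine Set.mem_iUnion.mpr ⟨n, ?_⟩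
      push_cast
      exact ⟨by linarith, by linarith⟩
    · intro i
      simp only [Set.mem_iUnion, Set.mem_singleton_iff]
      exact ⟨-(i : ℚ) - 1, (i : ℚ) + 1, by push_cast; linarith [Nat.cast_nonneg (α := ℚ) i], rfl⟩
    · intro i
      rw [Measure.map_apply hmeas0 measurableSet_Ioo]
      have hsub : (fun x => a0 * x + b0) ⁻¹' Set.Ioo ((-(i : ℚ) - 1 : ℚ) : ℝ) (((i : ℚ) + 1 : ℚ) : ℝ)
          ⊆ (fun x => a0 * x + b0) ⁻¹' Set.Ioc ((-(i : ℚ) - 1 : ℚ) : ℝ) (((i : ℚ) + 1 : ℚ) : ℝ) :=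
        Set.preimage_mono Set.Ioo_subset_Ioc_self
      exact ne_top_of_le_ne_top (hfin_pre _ _) (measure_mono hsub)
    · intro Sset hSset
      simp only [Set.mem_iUnion, Set.mem_singleton_iff] at hSset
      obtain ⟨p, q, hpq, rfl⟩ := hSset
      exact hIoo _ _ (by exact_mod_cast hpq)
  refine ⟨cnn, ?_, hmain⟩
  rw [pos_iff_ne_zero]
  intro h0
  apply hν
  rw [← Measure.measure_univ_eq_zero]
  have : Measure.map (fun x => a0 * x + b0) ν Set.univ = ν Set.univ := by
    rw [Measure.map_apply hmeas0 MeasurableSet.univ, Set.preimage_univ]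
  rw [← this, hmain, h0, zero_smul, Measure.coe_zero, Pi.zero_apply]
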